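/- Let X and Y be independent random variables, each exponentially distributed with rate 1, and let α > 0. Then lim_{ρ→∞} log ℙ[XY ≤ ρ^{−α}] / log ρ = −α. Equivalently, the exponential order of the probability that the product XY falls below ρ^{−α} equals −α. -/

import Mathlib

open MeasureTheory ProbabilityTheory Filter

open Set in
lemma stmt10_expMeasure_Iic {s : ℝ} (hs : 0 ≤ s) :
    expMeasure 1 (Iic s) = ENNReal.ofReal (1 - Real.exp (-s)) := by
  haveI := isProbabilityMeasure_expMeasure (one_pos : (0:ℝ) < 1)
  rw [← ofReal_cdf (expMeasure 1) s]
  have h : cdf (expMeasure 1) s = 1 - Real.exp (-s) := by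
    have := cdf_expMeasure_eq (one_pos : (0:ℝ) < 1) s
    simpa [hs] using this
  rw [h]

open Set in
lemma stmt10_expMeasure_Iic_zero : expMeasure 1 (Iic 0) = 0 := by
  rw [stmt10_expMeasure_Iic le_rfl]
  simp

open Set in
lemma stmt10_ae_pos : ∀ᵐ x ∂(expMeasure 1), 0 < x := by
  rw [ae_iff]
  have h : {x : ℝ | ¬ 0 < x} = Iic 0 := by ext x; simp [not_lt]
  rw [h, stmt10_expMeasure_Iic_zero]

open Set in
lemma stmt10_lower {t : ℝ} (ht : 0 < t) (ht1 : t ≤ 1) :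
    ENNReal.ofReal (t / 4) ≤
      ((expMeasure 1).prod (expMeasure 1)) {p : ℝ × ℝ | p.1 * p.2 ≤ t} := by
  haveI := isProbabilityMeasure_expMeasure (one_pos : (0:ℝ) < 1)
  set s := Real.sqrt t with hs_def
  have hs0 : 0 < s := Real.sqrt_pos.mpr ht
  have hs1 : s ≤ 1 := Real.sqrt_le_one.mpr ht1
  have hss : s * s = t := Real.mul_self_sqrt ht.le
  have hsub : Icc (0:ℝ) s ×ˢ Icc (0:ℝ) s ⊆ {p : ℝ × ℝ | p.1 * p.2 ≤ t} := by
    rintro ⟨x, y⟩ ⟨⟨hx0, hxs⟩, ⟨hy0, hys⟩⟩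
    have : x * y ≤ s * s := mul_le_mul hxs hys hy0 hs0.le
    simpa [hss] using this.trans_eq hss
  have hIcc : ENNReal.ofReal (1 - Real.exp (-s)) ≤ expMeasure 1 (Icc 0 s) := by
    have h1 : expMeasure 1 (Iic s) ≤ expMeasure 1 (Iio 0) + expMeasure 1 (Icc 0 s) := by
      refine le_trans (measure_mono ?_) (measure_union_le _ _)
      intro x hx
      rcases lt_or_ge x 0 with h | h
      · exact Or.inl h
      · exact Or.inr ⟨h, hx⟩
    have h0 : expMeasure 1 (Iio 0) = 0 :=
      measure_mono_null Iio_subset_Iic_self stmt10_expMeasure_Iic_zero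
    rw [h0, zero_add] at h1
    calc ENNReal.ofReal (1 - Real.exp (-s)) = expMeasure 1 (Iic s) :=
          (stmt10_expMeasure_Iic hs0.le).symm
      _ ≤ _ := h1
  have hexp_nonneg : 0 ≤ 1 - Real.exp (-s) := by
    have : Real.exp (-s) ≤ 1 := Real.exp_le_one_iff.mpr (by linarith)
    linarith
  have hreal : t / 4 ≤ (1 - Real.exp (-s)) * (1 - Real.exp (-s)) := by
    have hE : Real.exp (-s) * Real.exp s = 1 := by
      rw [← Real.exp_add]; simp
    have hEs : s + 1 ≤ Real.exp s := Real.add_one_le_exp s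
    have hEpos : 0 < Real.exp s := Real.exp_pos s
    have hle : Real.exp (-s) ≤ 1 / (1 + s) := by
      rw [div_eq_inv_mul, mul_one]
      rw [Real.exp_neg]
      exact inv_anti₀ (by linarith) (by linarith)
    have h2 : s / 2 ≤ 1 - Real.exp (-s) := by
      have : 1 / (1 + s) ≤ 1 - s / 2 := by
        rw [div_le_iff₀ (by linarith : (0:ℝ) < 1 + s)]
        nlinarith
      linarith
    have hs2 : 0 ≤ s / 2 := by linarith
    nlinarith
  calc ENNReal.ofReal (t / 4)
      ≤ ENNReal.ofReal ((1 - Real.exp (-s)) * (1 - Real.exp (-s))) :=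
        ENNReal.ofReal_le_ofReal hreal
    _ = ENNReal.ofReal (1 - Real.exp (-s)) * ENNReal.ofReal (1 - Real.exp (-s)) :=
        ENNReal.ofReal_mul hexp_nonneg
    _ ≤ expMeasure 1 (Icc 0 s) * expMeasure 1 (Icc 0 s) := mul_le_mul' hIcc hIcc
    _ = ((expMeasure 1).prod (expMeasure 1)) (Icc (0:ℝ) s ×ˢ Icc (0:ℝ) s) :=
        (Measure.prod_prod _ _).symm
    _ ≤ _ := measure_mono hsub

open Set in
lemma stmt10_upper {δ t : ℝ} (hδ0 : 0 < δ) (hδ1 : δ < 1) (ht : 0 < t) :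
    ((expMeasure 1).prod (expMeasure 1)) {p : ℝ × ℝ | p.1 * p.2 ≤ t}
      ≤ ENNReal.ofReal (t ^ δ * Real.Gamma (1 - δ)) := by
  haveI := isProbabilityMeasure_expMeasure (one_pos : (0:ℝ) < 1)
  have hm : MeasurableSet {p : ℝ × ℝ | p.1 * p.2 ≤ t} :=
    measurableSet_le (measurable_fst.mul measurable_snd) measurable_const
  rw [Measure.prod_apply hm]
  have hfmeas : Measurable fun x : ℝ => ENNReal.ofReal (x ^ (-δ)) := by
    fun_prop
  have step1 : ∫⁻ x, expMeasure 1 (Prod.mk x ⁻¹' {p : ℝ × ℝ | p.1 * p.2 ≤ t})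
        ∂(expMeasure 1)
      ≤ ∫⁻ x, ENNReal.ofReal (t ^ δ) * ENNReal.ofReal (x ^ (-δ)) ∂(expMeasure 1) := by
    refine lintegral_mono_ae ?_
    filter_upwards [stmt10_ae_pos] with x hx
    have hpre : Prod.mk x ⁻¹' {p : ℝ × ℝ | p.1 * p.2 ≤ t} = Iic (t / x) := by
      ext y
      simp only [mem_preimage, mem_setOf_eq, mem_Iic]
      rw [le_div_iff₀ hx, mul_comm]
    rw [hpre, stmt10_expMeasure_Iic (by positivity), ← ENNReal.ofReal_mul (by positivity)]
    apply ENNReal.ofReal_le_ofReal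
    set u := t / x with hu_def
    have hu : 0 < u := div_pos ht hx
    have hval : t ^ δ * x ^ (-δ) = u ^ δ := by
      rw [hu_def, Real.div_rpow ht.le hx.le, Real.rpow_neg hx.le, div_eq_mul_inv]
    rw [hval]
    rcases le_or_gt u 1 with h | h
    · have h1 : 1 - Real.exp (-u) ≤ u := by nlinarith [Real.add_one_le_exp (-u)]
      have h2 : u ^ (1:ℝ) ≤ u ^ δ := Real.rpow_le_rpow_of_exponent_ge hu h hδ1.le
      rw [Real.rpow_one] at h2; linarith
    · have h1 : (1:ℝ) ≤ u ^ δ := by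
        rw [← Real.one_rpow δ]
        exact Real.rpow_le_rpow zero_le_one h.le hδ0.le
      have := Real.exp_pos (-u); linarith
  refine le_trans step1 ?_
  rw [lintegral_const_mul _ hfmeas]
  have hνdef : expMeasure 1 = volume.withDensity (exponentialPDF 1) := rfl
  have hpdfmeas : Measurable (exponentialPDF 1) :=
    (measurable_gammaPDFReal 1 1).ennreal_ofReal
  have hI : ∫⁻ x, ENNReal.ofReal (x ^ (-δ)) ∂(expMeasure 1)
      = ∫⁻ x in Ioi (0:ℝ), ENNReal.ofReal (Real.exp (-x) * x ^ (-δ)) := by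
    rw [hνdef, lintegral_withDensity_eq_lintegral_mul _ hpdfmeas hfmeas]
    have hind : (fun x => exponentialPDF 1 x * ENNReal.ofReal (x ^ (-δ)))
        = (Ioi (0:ℝ)).indicator (fun x => ENNReal.ofReal (Real.exp (-x) * x ^ (-δ))) := by
      funext x
      rcases lt_trichotomy x 0 with h | h | h
      · rw [exponentialPDF_of_neg h, zero_mul,
          indicator_of_notMem (by simp [h.not_gt] : x ∉ Ioi (0:ℝ))]
      · subst h
        rw [Real.zero_rpow (by linarith : -δ ≠ 0)]
        simp
      · rw [indicator_of_mem (mem_Ioi.mpr h), exponentialPDF_of_nonneg h.le,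
          ← ENNReal.ofReal_mul (by positivity)]
        norm_num
    simp only [Pi.mul_apply]
    rw [lintegral_congr (fun a => congrFun hind a), lintegral_indicator measurableSet_Ioi _]
  rw [hI]
  have h1δ : 0 < 1 - δ := by linarith
  have hint : IntegrableOn (fun x => Real.exp (-x) * x ^ (-δ)) (Ioi (0:ℝ)) := by
    have := Real.GammaIntegral_convergent h1δ
    simpa [show (1 - δ) - 1 = -δ by ring] using this
  have hnn : 0 ≤ᵐ[volume.restrict (Ioi (0:ℝ))] fun x => Real.exp (-x) * x ^ (-δ) := by
    filter_upwards [ae_restrict_mem measurableSet_Ioi] with x hx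
    exact mul_nonneg (Real.exp_nonneg _) (Real.rpow_nonneg (le_of_lt hx) _)
  rw [← ofReal_integral_eq_lintegral_ofReal hint hnn]
  rw [← ENNReal.ofReal_mul (by positivity)]
  apply le_of_eq
  rw [Real.Gamma_eq_integral h1δ, show (1 - δ) - 1 = -δ by ring]

theorem stmt10 {Ω : Type*} [MeasurableSpace Ω] (μ : Measure Ω)
    [IsProbabilityMeasure μ] (X Y : Ω → ℝ)
    (hX : Measurable X) (hY : Measurable Y)
    (hXexp : μ.map X = expMeasure 1) (hYexp : μ.map Y = expMeasure 1)
    (hindep : IndepFun X Y μ) (α : ℝ) (hα : 0 < α) :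
    Tendsto
      (fun ρ : ℝ => Real.log ((μ {ω | X ω * Y ω ≤ ρ ^ (-α)}).toReal) / Real.log ρ)
      atTop (nhds (-α)) := by
  haveI := isProbabilityMeasure_expMeasure (one_pos : (0:ℝ) < 1)
  have hmap : μ.map (fun ω => (X ω, Y ω)) = (expMeasure 1).prod (expMeasure 1) := by
    have := (indepFun_iff_map_prod_eq_prod_map_map hX.aemeasurable hY.aemeasurable).mp hindep
    rwa [hXexp, hYexp] at this
  have hμeq : ∀ t : ℝ, μ {ω | X ω * Y ω ≤ t}
      = ((expMeasure 1).prod (expMeasure 1)) {p : ℝ × ℝ | p.1 * p.2 ≤ t} := by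
    intro t
    have hm : MeasurableSet {p : ℝ × ℝ | p.1 * p.2 ≤ t} :=
      measurableSet_le (measurable_fst.mul measurable_snd) measurable_const
    rw [← hmap, Measure.map_apply (hX.prodMk hY) hm]
    rfl
  -- basic bounds (as real numbers)
  have hlow : ∀ t : ℝ, 0 < t → t ≤ 1 → t / 4 ≤ (μ {ω | X ω * Y ω ≤ t}).toReal := by
    intro t ht ht1
    rw [hμeq t]
    exact (ENNReal.ofReal_le_iff_le_toReal (measure_ne_top _ _)).mp (stmt10_lower ht ht1)
  have hup : ∀ δ t : ℝ, 0 < δ → δ < 1 → 0 < t →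
      (μ {ω | X ω * Y ω ≤ t}).toReal ≤ t ^ δ * Real.Gamma (1 - δ) := by
    intro δ t hδ0 hδ1 ht
    rw [hμeq t]
    refine ENNReal.toReal_le_of_le_ofReal ?_ (stmt10_upper hδ0 hδ1 ht)
    have := Real.Gamma_pos_of_pos (by linarith : (0:ℝ) < 1 - δ)
    positivity
  rw [tendsto_order]
  constructor
  · intro b hb
    have h0 : Tendsto (fun ρ : ℝ => Real.log 4 / Real.log ρ) atTop (nhds 0) :=
      Tendsto.div_atTop tendsto_const_nhds Real.tendsto_log_atTop
    have hg : Tendsto (fun ρ : ℝ => -α - Real.log 4 / Real.log ρ) atTop (nhds (-α)) := by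
      simpa using tendsto_const_nhds.sub h0
    filter_upwards [hg.eventually (eventually_gt_nhds hb), eventually_gt_atTop (1:ℝ)]
      with ρ hρb hρ1
    have hρ0 : (0:ℝ) < ρ := by linarith
    set t := ρ ^ (-α) with ht_def
    have ht : 0 < t := Real.rpow_pos_of_pos hρ0 _
    have ht1 : t ≤ 1 := Real.rpow_le_one_of_one_le_of_nonpos hρ1.le (by linarith)
    have hL : 0 < Real.log ρ := Real.log_pos hρ1
    have hlog : Real.log (t / 4) ≤ Real.log ((μ {ω | X ω * Y ω ≤ t}).toReal) :=
      Real.log_le_log (by positivity) (hlow t ht ht1)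
    have hlogt : Real.log t = -α * Real.log ρ := Real.log_rpow hρ0 _
    have heq : Real.log (t / 4) = -α * Real.log ρ - Real.log 4 := by
      rw [Real.log_div ht.ne' (by norm_num), hlogt]
    calc b < -α - Real.log 4 / Real.log ρ := hρb
      _ = Real.log (t / 4) / Real.log ρ := by
          rw [heq]; field_simp
      _ ≤ _ := by
          exact div_le_div_of_nonneg_right hlog hL.le |>.trans_eq rfl
  · intro b hb
    set m := max 0 (-b / α) with hm_def
    have hm1 : m < 1 := by
      have : -b / α < 1 := (div_lt_one hα).mpr (by linarith)
      exact max_lt one_pos this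
    have hm0 : 0 ≤ m := le_max_left _ _
    set δ := (1 + m) / 2 with hδ_def
    have hδ0 : 0 < δ := by rw [hδ_def]; linarith
    have hδ1 : δ < 1 := by rw [hδ_def]; linarith
    have hδm : m < δ := by rw [hδ_def]; linarith
    have hδb : -(δ * α) < b := by
      have h1 : -b / α < δ := lt_of_le_of_lt (le_max_right _ _) hδm
      have h2 : -b < δ * α := by
        have := (div_lt_iff₀ hα).mp h1
        linarith
      linarith
    set C := Real.Gamma (1 - δ) with hC_def
    have hC : 0 < C := Real.Gamma_pos_of_pos (by linarith)
    have hh : Tendsto (fun ρ : ℝ => Real.log C / Real.log ρ - δ * α) atTop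
        (nhds (-(δ * α))) := by
      have h0 : Tendsto (fun ρ : ℝ => Real.log C / Real.log ρ) atTop (nhds 0) :=
        Tendsto.div_atTop tendsto_const_nhds Real.tendsto_log_atTop
      simpa using h0.sub (tendsto_const_nhds : Tendsto (fun _ : ℝ => δ * α) atTop _)
    filter_upwards [hh.eventually (eventually_lt_nhds hδb), eventually_gt_atTop (1:ℝ)]
      with ρ hρb hρ1
    have hρ0 : (0:ℝ) < ρ := by linarith
    set t := ρ ^ (-α) with ht_def
    have ht : 0 < t := Real.rpow_pos_of_pos hρ0 _
    have ht1 : t ≤ 1 := Real.rpow_le_one_of_one_le_of_nonpos hρ1.le (by linarith)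
    have hL : 0 < Real.log ρ := Real.log_pos hρ1
    have hPpos : 0 < (μ {ω | X ω * Y ω ≤ t}).toReal :=
      lt_of_lt_of_le (by positivity) (hlow t ht ht1)
    have hlog : Real.log ((μ {ω | X ω * Y ω ≤ t}).toReal) ≤ Real.log (t ^ δ * C) :=
      Real.log_le_log hPpos (hup δ t hδ0 hδ1 ht)
    have hlogt : Real.log t = -α * Real.log ρ := Real.log_rpow hρ0 _
    have heq : Real.log (t ^ δ * C) = Real.log C - δ * α * Real.log ρ := by
      rw [Real.log_mul (by positivity) hC.ne', Real.log_rpow ht, hlogt]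
      ring
    calc Real.log ((μ {ω | X ω * Y ω ≤ t}).toReal) / Real.log ρ
        ≤ Real.log (t ^ δ * C) / Real.log ρ := div_le_div_of_nonneg_right hlog hL.le
      _ = Real.log C / Real.log ρ - δ * α := by rw [heq]; field_simp
      _ < b := hρb
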